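/- Let 0 < α < 1, let F be α-SR, and let r > 0 be a monopoly price of F, i.e. φ(r) = 0. Then ∫₀^r (1−F(v)) dv ≤ (1−F(r)) · (r/α) · (α^{−α/(1−α)} − 1). -/

import Mathlib

open MeasureTheory Real Filter

/-- The virtual valuation function `φ(v) = v − (1 − F(v))/f(v)`. -/
noncomputable def virtualValue (F f : ℝ → ℝ) (v : ℝ) : ℝ := v - (1 - F v) / f v

/-- The hazard rate `h(v) = f(v)/(1 − F(v))`. -/
noncomputable def hazardRate (F f : ℝ → ℝ) (v : ℝ) : ℝ := f v / (1 - F v)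

/-- `F` is the CDF of a continuous distribution supported on `[0, ∞)`,
with density `f = F'` that is positive wherever `F < 1`. -/
structure IsCDF (F f : ℝ → ℝ) : Prop where
  zero : F 0 = 0
  mono : Monotone F
  le_one : ∀ v, F v ≤ 1
  tendsto_one : Tendsto F atTop (nhds 1)
  hasDeriv : ∀ v, 0 ≤ v → HasDerivAt F (f v) v
  f_pos : ∀ v, 0 ≤ v → F v < 1 → 0 < f v

/-- `F` is `α`-strongly regular: `φ(y) − φ(x) ≥ α (y − x)` for all `x < y` in the support. -/
def IsAlphaSR (α : ℝ) (F f : ℝ → ℝ) : Prop :=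
  ∀ x y, 0 ≤ x → x < y → F y < 1 →
    virtualValue F f y - virtualValue F f x ≥ α * (y - x)

theorem head_integral_bound (α : ℝ) (F f : ℝ → ℝ)
    (hα0 : 0 < α) (hα1 : α < 1)
    (hcdf : IsCDF F f) (hSR : IsAlphaSR α F f)
    (r : ℝ) (hr : 0 < r) (hmon : virtualValue F f r = 0) :
    (∫ v in (0:ℝ)..r, (1 - F v)) ≤
      (1 - F r) * (r / α) * (α ^ (-(α / (1 - α)) : ℝ) - 1) := by
  have h1α : (0:ℝ) < 1 - α := by linarith
  set β : ℝ := 1 / (1 - α) with hβdef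
  have hβpos : 0 < β := by positivity
  set c : ℝ → ℝ := fun v => α * r + (1 - α) * v with hcdef
  -- F r < 1
  have hFr : F r < 1 := by
    rcases lt_or_eq_of_le (hcdf.le_one r) with h | h
    · exact h
    · exfalso
      have h0 : virtualValue F f r = r := by
        simp [virtualValue, ← h]
      rw [hmon] at h0
      linarith
  -- positivity facts on [0,r]
  have hFv : ∀ v ∈ Set.Icc (0:ℝ) r, (0:ℝ) < 1 - F v := fun v hv => by
    have := lt_of_le_of_lt (hcdf.mono hv.2) hFr; linarith
  have hfv : ∀ v ∈ Set.Icc (0:ℝ) r, 0 < f v := fun v hv =>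
    hcdf.f_pos v hv.1 (by have := hFv v hv; linarith)
  have hcpos : ∀ v ∈ Set.Icc (0:ℝ) r, 0 < c v := fun v hv => by
    have h1 := hv.1; simp only [hcdef]; nlinarith
  -- key: (1 - F v)/f v ≥ c v on [0,r]
  have hkey : ∀ v ∈ Set.Icc (0:ℝ) r, c v ≤ (1 - F v) / f v := by
    intro v hv
    rcases lt_or_eq_of_le hv.2 with hlt | heq
    · have := hSR v r hv.1 hlt hFr
      rw [hmon] at this
      simp only [virtualValue] at this
      simp only [hcdef]; nlinarith
    · subst heq
      have : (1 - F v) / f v = v := by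
        simp only [virtualValue] at hmon; linarith
      simp only [hcdef]; nlinarith
  -- hazard rate bound
  have hhaz : ∀ v ∈ Set.Icc (0:ℝ) r, f v / (1 - F v) ≤ 1 / c v := by
    intro v hv
    have h1 := hFv v hv; have h2 := hfv v hv; have h3 := hcpos v hv
    have h4 := hkey v hv
    rw [div_le_div_iff₀ h1 h3]
    have h5 := (le_div_iff₀ h2).mp h4
    nlinarith
  -- the comparison function ψ
  set ψ : ℝ → ℝ := fun v => Real.log (1 - F v) + β * Real.log (c v) with hψdef
  have hψderiv : ∀ v ∈ Set.Icc (0:ℝ) r,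
      HasDerivAt ψ (-(f v) / (1 - F v) + β * ((1 - α) / c v)) v := by
    intro v hv
    have h1 : HasDerivAt (fun v => 1 - F v) (-(f v)) v := by
      simpa using (hcdf.hasDeriv v hv.1).const_sub 1
    have h2 := h1.log (ne_of_gt (hFv v hv))
    have h3 : HasDerivAt c (1 - α) v := by
      rw [hcdef]; simpa using ((hasDerivAt_id v).const_mul (1 - α)).const_add (α * r)
    have h4 := (h3.log (ne_of_gt (hcpos v hv))).const_mul β
    exact h2.add h4
  have hψcont : ContinuousOn ψ (Set.Icc 0 r) := fun v hv =>
    ((hψderiv v hv).continuousAt).continuousWithinAt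
  have hψmono : MonotoneOn ψ (Set.Icc 0 r) := by
    apply monotoneOn_of_deriv_nonneg (convex_Icc 0 r) hψcont
    · intro x hx
      rw [interior_Icc] at hx
      exact ((hψderiv x (Set.mem_Icc_of_Ioo hx)).differentiableAt).differentiableWithinAt
    · intro x hx
      rw [interior_Icc] at hx
      have hx' := Set.mem_Icc_of_Ioo hx
      rw [(hψderiv x hx').deriv]
      have h1 := hhaz x hx'
      have h2 : β * ((1 - α) / c x) = 1 / c x := by
        rw [hβdef]
        field_simp [ne_of_gt h1α, ne_of_gt (hcpos x hx')]
      rw [h2]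
      have : -(f x) / (1 - F x) = -(f x / (1 - F x)) := by ring
      rw [this]
      linarith
  -- pointwise bound
  have hpt : ∀ v ∈ Set.Icc (0:ℝ) r,
      1 - F v ≤ (1 - F r) * r ^ β * (c v) ^ (-β) := by
    intro v hv
    have hψle : ψ v ≤ ψ r := hψmono hv (Set.right_mem_Icc.mpr hr.le) hv.2
    have hcr : c r = r := by simp only [hcdef]; ring
    have h1 := hFv v hv
    have h2 : (0:ℝ) < 1 - F r := by linarith
    have h3 := hcpos v hv
    have hlog : Real.log (1 - F v) ≤ Real.log (1 - F r) + β * Real.log r - β * Real.log (c v) := by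
      simp only [hψdef, hcr] at hψle; linarith
    calc 1 - F v = Real.exp (Real.log (1 - F v)) := (Real.exp_log h1).symm
      _ ≤ Real.exp (Real.log (1 - F r) + β * Real.log r - β * Real.log (c v)) :=
          Real.exp_le_exp.mpr hlog
      _ = (1 - F r) * r ^ β * (c v) ^ (-β) := by
          rw [Real.rpow_def_of_pos hr, Real.rpow_def_of_pos h3,
            Real.exp_sub, Real.exp_add, Real.exp_log h2,
            show Real.log (c v) * -β = -(β * Real.log (c v)) from by ring,
            Real.exp_neg, show Real.log r * β = β * Real.log r from by ring]
          ring
  -- continuity of c and positivity on uIcc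
  have huIcc : Set.uIcc (0:ℝ) r = Set.Icc 0 r := Set.uIcc_of_le hr.le
  have hccont : Continuous c := by continuity
  -- interval integrability
  have hInt1 : IntervalIntegrable (fun v => 1 - F v) volume 0 r := by
    apply ContinuousOn.intervalIntegrable
    rw [huIcc]
    intro v hv
    exact ContinuousAt.continuousWithinAt
      (continuousAt_const.sub (hcdf.hasDeriv v hv.1).continuousAt)
  have hInt2 : IntervalIntegrable (fun v => (1 - F r) * r ^ β * (c v) ^ (-β)) volume 0 r := by
    apply ContinuousOn.intervalIntegrable
    rw [huIcc]
    exact (continuousOn_const.mul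
      ((hccont.continuousOn).rpow_const (fun x hx => Or.inl (ne_of_gt (hcpos x hx)))))
  have hIntc : IntervalIntegrable (fun v => (c v) ^ (-β)) volume 0 r := by
    apply ContinuousOn.intervalIntegrable
    rw [huIcc]
    exact (hccont.continuousOn).rpow_const (fun x hx => Or.inl (ne_of_gt (hcpos x hx)))
  -- integral comparison
  have hcomp : (∫ v in (0:ℝ)..r, (1 - F v)) ≤
      ∫ v in (0:ℝ)..r, (1 - F r) * r ^ β * (c v) ^ (-β) :=
    intervalIntegral.integral_mono_on hr.le hInt1 hInt2 hpt
  -- compute the integral via FTC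
  have hβne : (1:ℝ) - β ≠ 0 := by
    simp only [hβdef]
    intro h
    have : (1 - α) * (1 - 1/(1-α)) = 0 := by rw [h]; ring
    have h2 : (1 - α) * (1 - 1/(1-α)) = -α := by field_simp; ring
    rw [h2] at this; linarith
  set H : ℝ → ℝ := fun v => (c v) ^ (1 - β) / ((1 - α) * (1 - β)) with hHdef
  have hHderiv : ∀ v ∈ Set.uIcc (0:ℝ) r, HasDerivAt H ((c v) ^ (-β)) v := by
    intro v hv
    rw [huIcc] at hv
    have h3 : HasDerivAt c (1 - α) v := by
      rw [hcdef]; simpa using ((hasDerivAt_id v).const_mul (1 - α)).const_add (α * r)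
    have h5 := (h3.rpow_const (p := 1 - β) (Or.inl (ne_of_gt (hcpos v hv)))).div_const ((1 - α) * (1 - β))
    have hne : (1 - α) * (1 - β) ≠ 0 := mul_ne_zero (by linarith) hβne
    have heq : (1 - α) * (1 - β) * c v ^ (1 - β - 1) / ((1 - α) * (1 - β)) = (c v) ^ (-β) := by
      rw [show (1:ℝ) - β - 1 = -β from by ring, mul_div_cancel_left₀ _ hne]
    rw [← heq]
    exact h5
  have hFTC : (∫ v in (0:ℝ)..r, (c v) ^ (-β)) = H r - H 0 :=
    intervalIntegral.integral_eq_sub_of_hasDerivAt hHderiv hIntc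
  -- final algebra
  have hcr : c r = r := by simp only [hcdef]; ring
  have hc0 : c 0 = α * r := by simp only [hcdef]; ring
  have hexp : -(α / (1 - α)) = 1 - β := by
    simp only [hβdef]; field_simp; ring
  have hRHS : (∫ v in (0:ℝ)..r, (1 - F r) * r ^ β * (c v) ^ (-β)) =
      (1 - F r) * (r / α) * (α ^ (-(α / (1 - α)) : ℝ) - 1) := by
    rw [intervalIntegral.integral_const_mul, hFTC]
    simp only [hHdef, hcr, hc0, hexp]
    rw [Real.mul_rpow hα0.le hr.le]
    have h1 : (1 - α) * (1 - β) = -α := by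
      simp only [hβdef]; field_simp; ring
    rw [h1]
    have h2 : r ^ β * r ^ ((1:ℝ) - β) = r := by
      rw [← Real.rpow_add hr]; norm_num
    linear_combination ((1 - F r) * (α ^ ((1:ℝ) - β) - 1) / α) * h2
  rw [hRHS] at hcomp
  exact hcomp
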